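/- Let p ≥ 2 be an integer, V a type, and c : V × V → ℤ a finitely supported function with loop-free antisymmetric support and 0 ≤ c(a,b) ≤ p − 1 for all a, b. Suppose z ∈ V satisfies ∂c(z) ≤ −p, and suppose v₀ = z, v₁, …, v_N ∈ V (with N ≥ 1) are vertices such that c(v_{i−1}, v_i) > 0 for every i = 1, …, N, ∂c(v_N) ≥ 1, and the ordered pairs (v_{i−1}, v_i) are pairwise distinct. Define c¹ : V × V → ℤ by setting, for each i = 1, …, N, c¹(v_{i−1}, v_i) = 0 and c¹(v_i, v_{i−1}) = p − c(v_{i−1}, v_i), and c¹ = c on all ordered pairs not of the form (v_{i−1}, v_i) or (v_i, v_{i−1}). Then: (1) c¹ is finitely supported, has loop-free antisymmetric support, and 0 ≤ c¹(a,b) ≤ p − 1 for all a, b; (2) c¹(a,b) − c¹(b,a) ≡ c(a,b) − c(b,a) (mod p) for all a, b; (3) ∂c¹(z) = ∂c(z) + p; (4) ∂c¹(v_N) = ∂c(v_N) − p, so that |∂c¹(v_N)| ≤ |∂c(v_N)| + p − 2; (5) ∂c¹(v) = ∂c(v) for every v ∉ {z, v_N}; and (6) Σ_v |∂c¹(v)|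 ≤ Σ_v |∂c(v)| − 2. -/
import Mathlib


/-- The boundary of an integer 1-chain `c : V × V → ℤ`:
`∂c(v) = Σ_u (c(u,v) − c(v,u))` (a finite sum when `c` is finitely supported). -/
noncomputable def chainBd {V : Type*} (c : V × V → ℤ) (v : V) : ℤ :=
  ∑ᶠ u : V, (c (u, v) - c (v, u))

/-- The orientation-reversal step along a chain of segments joining a boundary point `z`
of multiplicity `≤ −p` to a boundary point of positive multiplicity: reversing each edge
`(v_{i-1}, v_i)` of the chain and replacing its multiplicity `θ` by `p − θ` preserves the
multiplicity range `{0, …, p−1}` and the class modulo `p`, increases `∂` at `z` by `p`,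
decreases `∂` at the endpoint by `p`, leaves `∂` unchanged elsewhere, and decreases
the total boundary mass by at least `2`. -/
theorem statement1 {V : Type*} (p : ℤ) (hp : 2 ≤ p) (c : V × V → ℤ)
    (hfin : (Function.support c).Finite)
    (hloop : ∀ v : V, c (v, v) = 0)
    (hanti : ∀ a b : V, 0 < c (a, b) → c (b, a) = 0)
    (hrange : ∀ a b : V, 0 ≤ c (a, b) ∧ c (a, b) ≤ p - 1)
    (z : V) (hz : chainBd c z ≤ -p)
    (N : ℕ) (hN : 1 ≤ N) (v : Fin (N + 1) → V)
    (hv0 : v 0 = z)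
    (hedge : ∀ i : Fin N, 0 < c (v i.castSucc, v i.succ))
    (hend : 1 ≤ chainBd c (v (Fin.last N)))
    (hinj : Function.Injective (fun i : Fin N => (v i.castSucc, v i.succ)))
    (c1 : V × V → ℤ)
    (hc1a : ∀ i : Fin N, c1 (v i.castSucc, v i.succ) = 0)
    (hc1b : ∀ i : Fin N, c1 (v i.succ, v i.castSucc) = p - c (v i.castSucc, v i.succ))
    (hc1c : ∀ e : V × V,
      (∀ i : Fin N, e ≠ (v i.castSucc, v i.succ) ∧ e ≠ (v i.succ, v i.castSucc)) →
      c1 e = c e) :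
    ((Function.support c1).Finite ∧
      (∀ w : V, c1 (w, w) = 0) ∧
      (∀ a b : V, 0 < c1 (a, b) → c1 (b, a) = 0) ∧
      (∀ a b : V, 0 ≤ c1 (a, b) ∧ c1 (a, b) ≤ p - 1)) ∧
    (∀ a b : V, c1 (a, b) - c1 (b, a) ≡ c (a, b) - c (b, a) [ZMOD p]) ∧
    (chainBd c1 z = chainBd c z + p) ∧
    (chainBd c1 (v (Fin.last N)) = chainBd c (v (Fin.last N)) - p ∧
      |chainBd c1 (v (Fin.last N))| ≤ |chainBd c (v (Fin.last N))| + p - 2) ∧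
    (∀ w : V, w ≠ z → w ≠ v (Fin.last N) → chainBd c1 w = chainBd c w) ∧
    (∑ᶠ w : V, |chainBd c1 w|) ≤ (∑ᶠ w : V, |chainBd c w|) - 2 := by
  classical
  set E : Fin N → V × V := fun i => (v i.castSucc, v i.succ) with hE
  set R : Fin N → V × V := fun i => (v i.succ, v i.castSucc) with hR
  have hEinj : Function.Injective E := hinj
  have hRinj : Function.Injective R := by
    intro i j h
    apply hEinj
    have : Prod.swap (R i) = Prod.swap (R j) := by rw [h]
    simpa [hE, hR] using this
  have hcR : ∀ i, c (R i) = 0 := fun i => hanti _ _ (hedge i)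
  have hvne : ∀ i : Fin N, v i.castSucc ≠ v i.succ := by
    intro i h
    have h2 := hedge i
    rw [h, hloop] at h2
    exact lt_irrefl 0 h2
  have hER : ∀ i j, E i ≠ R j := by
    intro i j h
    have h1 : 0 < c (E i) := hedge i
    rw [h, hcR j] at h1
    exact lt_irrefl 0 h1
  -- c1 values
  have hc1E : ∀ i, c1 (E i) = 0 := hc1a
  have hc1R : ∀ i, c1 (R i) = p - c (E i) := hc1b
  have hc1O : ∀ e, (∀ i, e ≠ E i) → (∀ i, e ≠ R i) → c1 e = c e := by
    intro e h1 h2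
    exact hc1c e (fun i => ⟨h1 i, h2 i⟩)
  -- the difference function
  have hd : ∀ e, c1 e - c e =
      ∑ i : Fin N, ((if e = E i then -(c (E i)) else 0) + (if e = R i then p - c (E i) else 0)) := by
    intro e
    by_cases h1 : ∃ i, e = E i
    · obtain ⟨i, rfl⟩ := h1
      rw [hc1E i, Finset.sum_eq_single i]
      · simp [hER i i, hcR]
      · intro j _ hj
        have : E i ≠ E j := fun h => hj (hEinj h).symm
        simp [this, hER i j]
      · simp
    · by_cases h2 : ∃ i, e = R i
      · obtain ⟨i, rfl⟩ := h2
        rw [hc1R i, hcR i, Finset.sum_eq_single i]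
        · have : R i ≠ E i := fun h => hER i i h.symm
          simp [this]
        · intro j _ hj
          have h3 : R i ≠ E j := fun h => hER j i h.symm
          have h4 : R i ≠ R j := fun h => hj (hRinj h).symm
          simp [h3, h4]
        · simp
      · push_neg at h1 h2
        rw [hc1O e h1 h2]
        have : ∀ j ∈ Finset.univ, ((if e = E j then -(c (E j)) else 0) + (if e = R j then p - c (E j) else 0)) = 0 := by
          intro j _; simp [h1 j, h2 j]
        rw [Finset.sum_congr rfl this]
        simp
  -- finite support set
  set T : Finset (V × V) := hfin.toFinset ∪ Finset.image R Finset.univ with hT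
  have hsuppc : ∀ e, c e ≠ 0 → e ∈ T := by
    intro e he
    exact Finset.mem_union_left _ (hfin.mem_toFinset.mpr he)
  have hsuppc1 : ∀ e, c1 e ≠ 0 → e ∈ T := by
    intro e he
    by_cases h1 : ∃ i, e = E i
    · obtain ⟨i, rfl⟩ := h1; exact absurd (hc1E i) he
    · by_cases h2 : ∃ i, e = R i
      · obtain ⟨i, rfl⟩ := h2
        exact Finset.mem_union_right _ (Finset.mem_image_of_mem R (Finset.mem_univ i))
      · push_neg at h1 h2
        rw [hc1O e h1 h2] at he
        exact hsuppc e he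
  set S : Finset V := T.image Prod.fst ∪ T.image Prod.snd with hS
  have hmemS1 : ∀ e ∈ T, e.1 ∈ S := fun e he =>
    Finset.mem_union_left _ (Finset.mem_image_of_mem _ he)
  have hmemS2 : ∀ e ∈ T, e.2 ∈ S := fun e he =>
    Finset.mem_union_right _ (Finset.mem_image_of_mem _ he)
  have hvS : ∀ j : Fin (N + 1), v j ∈ S := by
    intro j
    by_cases hj : (j : ℕ) < N
    · have hfix : (⟨(j : ℕ), hj⟩ : Fin N).castSucc = j := Fin.ext (by simp)
      have : v j = (E ⟨j, hj⟩).1 := by simp only [hE, hfix]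
      rw [this]
      exact hmemS1 _ (hsuppc _ (ne_of_gt (hedge _)))
    · have hjN : (j : ℕ) = N := by omega
      have hfix : (⟨N - 1, by omega⟩ : Fin N).succ = j := Fin.ext (by simp; omega)
      have : v j = (E ⟨N - 1, by omega⟩).2 := by simp only [hE, hfix]
      rw [this]
      exact hmemS2 _ (hsuppc _ (ne_of_gt (hedge _)))
  have hbd_c : ∀ w, chainBd c w = ∑ x ∈ S, (c (x, w) - c (w, x)) := by
    intro w
    apply finsum_eq_finset_sum_of_support_subset
    intro u hu
    simp only [Function.mem_support] at hu
    by_cases h1 : c (u, w) ≠ 0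
    · exact hmemS1 _ (hsuppc _ h1)
    · push_neg at h1
      have : c (w, u) ≠ 0 := by intro h; rw [h1, h] at hu; simp at hu
      exact hmemS2 _ (hsuppc _ this)
  have hbd_c1 : ∀ w, chainBd c1 w = ∑ x ∈ S, (c1 (x, w) - c1 (w, x)) := by
    intro w
    apply finsum_eq_finset_sum_of_support_subset
    intro u hu
    simp only [Function.mem_support] at hu
    by_cases h1 : c1 (u, w) ≠ 0
    · exact hmemS1 _ (hsuppc1 _ h1)
    · push_neg at h1
      have : c1 (w, u) ≠ 0 := by intro h; rw [h1, h] at hu; simp at hu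
      exact hmemS2 _ (hsuppc1 _ this)
  -- helper for evaluating sums of ifs over pairs
  have hsum1 : ∀ (w A B : V) (a : ℤ), A ∈ S →
      (∑ x ∈ S, if (x, w) = (A, B) then a else 0) = if w = B then a else 0 := by
    intro w A B a hA
    by_cases h : w = B
    · subst h
      simp only [Prod.mk.injEq, and_true]
      simp [Finset.sum_ite_eq' S A (fun _ => a), hA]
    · have : ∀ x ∈ S, (if (x, w) = (A, B) then a else 0) = 0 := by
        intro x _
        simp [Prod.mk.injEq, h]
      rw [Finset.sum_congr rfl this]
      simp [h]
  have hsum2 : ∀ (w A B : V) (a : ℤ), B ∈ S →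
      (∑ x ∈ S, if (w, x) = (A, B) then a else 0) = if w = A then a else 0 := by
    intro w A B a hB
    by_cases h : w = A
    · subst h
      simp only [Prod.mk.injEq, true_and]
      simp [Finset.sum_ite_eq' S B (fun _ => a), hB]
    · have : ∀ x ∈ S, (if (w, x) = (A, B) then a else 0) = 0 := by
        intro x _
        simp [Prod.mk.injEq, h]
      rw [Finset.sum_congr rfl this]
      simp [h]
  have hkey : ∀ w, chainBd c1 w = chainBd c w +
      ((if w = z then p else 0) - (if w = v (Fin.last N) then p else 0)) := by
    intro w
    have hmain : ∑ x ∈ S, ((c1 (x, w) - c (x, w)) - (c1 (w, x) - c (w, x)))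
        = (if w = z then p else 0) - (if w = v (Fin.last N) then p else 0) := by
      have e1 : ∀ x, (c1 (x, w) - c (x, w)) - (c1 (w, x) - c (w, x)) =
          ∑ i : Fin N, (((if (x, w) = E i then -(c (E i)) else 0) +
            (if (x, w) = R i then p - c (E i) else 0)) -
            ((if (w, x) = E i then -(c (E i)) else 0) +
            (if (w, x) = R i then p - c (E i) else 0))) := by
        intro x
        rw [hd (x, w), hd (w, x), ← Finset.sum_sub_distrib]
      rw [Finset.sum_congr rfl (fun x _ => e1 x), Finset.sum_comm]
      have e2 : ∀ i : Fin N, ∑ x ∈ S,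
          (((if (x, w) = E i then -(c (E i)) else 0) +
            (if (x, w) = R i then p - c (E i) else 0)) -
            ((if (w, x) = E i then -(c (E i)) else 0) +
            (if (w, x) = R i then p - c (E i) else 0)))
          = (if w = v i.castSucc then p else 0) - (if w = v i.succ then p else 0) := by
        intro i
        rw [Finset.sum_sub_distrib, Finset.sum_add_distrib, Finset.sum_add_distrib]
        have hEi : E i = (v i.castSucc, v i.succ) := rfl
        have hRi : R i = (v i.succ, v i.castSucc) := rfl
        rw [hEi, hRi,
          hsum1 w _ _ _ (hvS _), hsum1 w _ _ _ (hvS _),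
          hsum2 w _ _ _ (hvS _), hsum2 w _ _ _ (hvS _)]
        by_cases h1 : w = v i.castSucc <;> by_cases h2 : w = v i.succ
        · exact absurd (h1.symm.trans h2) (hvne i)
        all_goals (simp [h1, h2, hvne i, (hvne i).symm]; try ring)
      rw [Finset.sum_congr rfl (fun i _ => e2 i)]
      set G : ℕ → ℤ := fun k => if h : k < N + 1 then (if w = v ⟨k, h⟩ then p else 0) else 0
        with hG
      have e3 : ∀ i : Fin N,
          ((if w = v i.castSucc then p else 0) - (if w = v i.succ then p else 0))
          = G (i : ℕ) - G ((i : ℕ) + 1) := by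
        intro i
        have hi1 : (i : ℕ) < N + 1 := by omega
        have hi2 : (i : ℕ) + 1 < N + 1 := by omega
        have k1 : (⟨(i : ℕ), hi1⟩ : Fin (N + 1)) = i.castSucc := Fin.ext rfl
        have k2 : (⟨(i : ℕ) + 1, hi2⟩ : Fin (N + 1)) = i.succ := Fin.ext rfl
        rw [hG]
        simp only [dif_pos hi1, dif_pos hi2, k1, k2]
      rw [Finset.sum_congr rfl (fun i _ => e3 i),
        Fin.sum_univ_eq_sum_range (fun k => G k - G (k + 1)) N,
        Finset.sum_range_sub' G N]
      have g0 : G 0 = if w = z then p else 0 := by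
        have h0 : (0 : ℕ) < N + 1 := by omega
        have : (⟨0, h0⟩ : Fin (N + 1)) = 0 := Fin.ext rfl
        rw [hG]
        simp only [dif_pos h0, this, hv0]
      have gN : G N = if w = v (Fin.last N) then p else 0 := by
        have h0 : N < N + 1 := by omega
        have : (⟨N, h0⟩ : Fin (N + 1)) = Fin.last N := Fin.ext rfl
        rw [hG]
        simp only [dif_pos h0, this]
      rw [g0, gN]
    rw [hbd_c1 w, hbd_c w, ← hmain, ← Finset.sum_add_distrib]
    apply Finset.sum_congr rfl
    intro x _
    ring
  have hzS : z ∈ S := hv0 ▸ hvS 0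
  have hlS : v (Fin.last N) ∈ S := hvS _
  have hzvN : z ≠ v (Fin.last N) := by
    intro h
    rw [← h] at hend
    omega
  have part3 : chainBd c1 z = chainBd c z + p := by
    rw [hkey z]
    simp [hzvN]
  have part4a : chainBd c1 (v (Fin.last N)) = chainBd c (v (Fin.last N)) - p := by
    rw [hkey]
    simp [Ne.symm hzvN]
    ring
  have part4b : |chainBd c1 (v (Fin.last N))| ≤ |chainBd c (v (Fin.last N))| + p - 2 := by
    rw [part4a]
    rcases abs_cases (chainBd c (v (Fin.last N)) - p) with ⟨h1, h2⟩ | ⟨h1, h2⟩ <;>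
      rcases abs_cases (chainBd c (v (Fin.last N))) with ⟨h3, h4⟩ | ⟨h3, h4⟩ <;> omega
  have part5 : ∀ w : V, w ≠ z → w ≠ v (Fin.last N) → chainBd c1 w = chainBd c w := by
    intro w hw1 hw2
    rw [hkey w]
    simp [hw1, hw2]
  -- part 1
  have part1a : (Function.support c1).Finite := by
    apply Set.Finite.subset T.finite_toSet
    intro e he
    exact hsuppc1 e he
  have part1b : ∀ w : V, c1 (w, w) = 0 := by
    intro w
    rw [hc1O (w, w)]
    · exact hloop w
    · intro i h
      simp only [hE, Prod.mk.injEq] at h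
      exact hvne i (h.1.symm.trans h.2)
    · intro i h
      simp only [hR, Prod.mk.injEq] at h
      exact hvne i (h.2.symm.trans h.1)
  have part1c : ∀ a b : V, 0 < c1 (a, b) → c1 (b, a) = 0 := by
    intro a b hab
    by_cases h1 : ∃ i, (a, b) = E i
    · obtain ⟨i, hi⟩ := h1
      rw [hi, hc1E i] at hab
      exact absurd hab (lt_irrefl 0)
    · by_cases h2 : ∃ i, (a, b) = R i
      · obtain ⟨i, hi⟩ := h2
        simp only [hR, Prod.mk.injEq] at hi
        rw [hi.1, hi.2]
        exact hc1a i
      · push_neg at h1 h2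
        by_cases h3 : ∃ j, (b, a) = E j
        · obtain ⟨j, hj⟩ := h3
          rw [hj]
          exact hc1E j
        · by_cases h4 : ∃ j, (b, a) = R j
          · obtain ⟨j, hj⟩ := h4
            exfalso
            apply h1 j
            simp only [hR, Prod.mk.injEq] at hj
            simp [hE, hj.1, hj.2]
          · push_neg at h3 h4
            rw [hc1O (b, a) h3 h4]
            rw [hc1O (a, b) h1 h2] at hab
            exact hanti a b hab
  have part1d : ∀ a b : V, 0 ≤ c1 (a, b) ∧ c1 (a, b) ≤ p - 1 := by
    intro a b
    by_cases h1 : ∃ i, (a, b) = E i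
    · obtain ⟨i, hi⟩ := h1
      rw [hi, hc1E i]
      omega
    · by_cases h2 : ∃ i, (a, b) = R i
      · obtain ⟨i, hi⟩ := h2
        rw [hi, hc1R i]
        simp only [hE]
        have h3 := hedge i
        have h4 := (hrange (v i.castSucc) (v i.succ)).2
        omega
      · push_neg at h1 h2
        rw [hc1O (a, b) h1 h2]
        exact hrange a b
  -- part 2
  have part2 : ∀ a b : V, c1 (a, b) - c1 (b, a) ≡ c (a, b) - c (b, a) [ZMOD p] := by
    intro a b
    by_cases h1 : ∃ i, (a, b) = E i
    · obtain ⟨i, hi⟩ := h1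
      simp only [hE, Prod.mk.injEq] at hi
      obtain ⟨rfl, rfl⟩ := hi
      rw [hc1a i, hc1b i, hanti _ _ (hedge i)]
      apply Int.ModEq.symm
      apply Int.modEq_iff_dvd.mpr
      exact ⟨-1, by ring⟩
    · by_cases h2 : ∃ i, (a, b) = R i
      · obtain ⟨i, hi⟩ := h2
        simp only [hR, Prod.mk.injEq] at hi
        obtain ⟨rfl, rfl⟩ := hi
        rw [hc1a i, hc1b i, hanti _ _ (hedge i)]
        apply Int.ModEq.symm
        apply Int.modEq_iff_dvd.mpr
        exact ⟨1, by ring⟩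
      · push_neg at h1 h2
        have h3 : ∀ j, (b, a) ≠ E j := by
          intro j h
          apply h2 j
          simp only [hE, Prod.mk.injEq] at h
          simp [hR, h.1, h.2]
        have h4 : ∀ j, (b, a) ≠ R j := by
          intro j h
          apply h1 j
          simp only [hR, Prod.mk.injEq] at h
          simp [hE, h.1, h.2]
        rw [hc1O (a, b) h1 h2, hc1O (b, a) h3 h4]
  -- part 6
  have habs0 : ∀ w, w ∉ S → chainBd c w = 0 := by
    intro w hw
    rw [hbd_c w]
    apply Finset.sum_eq_zero
    intro x _
    have e1 : c (x, w) = 0 := by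
      by_contra h
      exact hw (hmemS2 _ (hsuppc _ h))
    have e2 : c (w, x) = 0 := by
      by_contra h
      exact hw (hmemS1 _ (hsuppc _ h))
    rw [e1, e2, sub_zero]
  have habs1 : ∀ w, w ∉ S → chainBd c1 w = 0 := by
    intro w hw
    rw [hbd_c1 w]
    apply Finset.sum_eq_zero
    intro x _
    have e1 : c1 (x, w) = 0 := by
      by_contra h
      exact hw (hmemS2 _ (hsuppc1 _ h))
    have e2 : c1 (w, x) = 0 := by
      by_contra h
      exact hw (hmemS1 _ (hsuppc1 _ h))
    rw [e1, e2, sub_zero]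
  have ht1 : (∑ᶠ w : V, |chainBd c w|) = ∑ w ∈ S, |chainBd c w| := by
    apply finsum_eq_finset_sum_of_support_subset
    intro w hw
    by_contra hnw
    rw [Function.mem_support, habs0 w hnw] at hw
    simp at hw
  have ht2 : (∑ᶠ w : V, |chainBd c1 w|) = ∑ w ∈ S, |chainBd c1 w| := by
    apply finsum_eq_finset_sum_of_support_subset
    intro w hw
    by_contra hnw
    rw [Function.mem_support, habs1 w hnw] at hw
    simp at hw
  have part6 : (∑ᶠ w : V, |chainBd c1 w|) ≤ (∑ᶠ w : V, |chainBd c w|) - 2 := by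
    rw [ht1, ht2]
    have key : ∑ w ∈ S, |chainBd c1 w| ≤
        ∑ w ∈ S, (|chainBd c w| + ((if w = z then -p else 0) +
          (if w = v (Fin.last N) then p - 2 else 0))) := by
      apply Finset.sum_le_sum
      intro w _
      by_cases hw1 : w = z
      · subst hw1
        rw [part3]
        simp only [if_pos rfl, if_neg hzvN]
        rcases abs_cases (chainBd c w + p) with ⟨e1, e2⟩ | ⟨e1, e2⟩ <;>
          rcases abs_cases (chainBd c w) with ⟨e3, e4⟩ | ⟨e3, e4⟩ <;> omega
      · by_cases hw2 : w = v (Fin.last N)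
        · subst hw2
          rw [if_neg hw1, if_pos rfl]
          have := part4b
          omega
        · rw [part5 w hw1 hw2]
          simp [hw1, hw2]
    have key2 : ∑ w ∈ S, (|chainBd c w| + ((if w = z then -p else 0) +
          (if w = v (Fin.last N) then p - 2 else 0)))
        = (∑ w ∈ S, |chainBd c w|) + (-p) + (p - 2) := by
      rw [Finset.sum_add_distrib, Finset.sum_add_distrib,
        Finset.sum_ite_eq' S z (fun _ => -p),
        Finset.sum_ite_eq' S (v (Fin.last N)) (fun _ => p - 2),
        if_pos hzS, if_pos hlS]
      ring
    rw [key2] at key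
    omega
  exact ⟨⟨part1a, part1b, part1c, part1d⟩, part2, part3, ⟨part4a, part4b⟩, part5, part6⟩
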